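/- arXiv:1705.07308 — 2 statements merged into one kernel-verified Lean document; each statement's English description precedes it below -/
import Mathlib

section
/- There exist positive constants c₁, A and A′ such that for all ξ, η ∈ 𝔠₀, if the angle 𝔄(η, ξ) ∈ [0,π] between η and ξ satisfies 𝔄(η, ξ) ≤ c₁/K_ξ, then A·K_ξ ≤ K_η ≤ A′·K_ξ. -/
open Real Set

noncomputable def gfun (t : ℝ) : ℝ := (Real.sqrt (1 - t^2) - t * Real.arccos t) / Real.pi

noncomputable def Kcurv (t : ℝ) : ℝ :=
  deriv (deriv gfun) t / (1 + (deriv gfun t)^2) ^ ((3:ℝ)/2)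

def cone0 : Set (ℝ × ℝ) := {x | 0 < x.1 ∧ 0 < x.2 ∧ 1 < x.2 / x.1}

noncomputable def tpar (ξ : ℝ × ℝ) : ℝ := Real.cos (Real.pi * ξ.1 / ξ.2)

noncomputable def Kxi (ξ : ℝ × ℝ) : ℝ := Kcurv (tpar ξ)

noncomputable def enorm2 (x : ℝ × ℝ) : ℝ := Real.sqrt (x.1^2 + x.2^2)

/-- The angle in `[0, π]` between two vectors. -/
noncomputable def ang (u v : ℝ × ℝ) : ℝ :=
  Real.arccos ((u.1 * v.1 + u.2 * v.2) / (enorm2 u * enorm2 v))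

lemma hasDerivAt_gfun {t : ℝ} (h1 : -1 < t) (h2 : t < 1) :
    HasDerivAt gfun (-(Real.arccos t) / π) t := by
  have hs : (0:ℝ) < 1 - t^2 := by nlinarith
  have hsq : Real.sqrt (1 - t^2) ≠ 0 := by positivity
  have hin : HasDerivAt (fun s : ℝ => 1 - s^2) (-(2*t)) t := by
    simpa using ((hasDerivAt_pow 2 t).const_sub 1)
  have hsqrt : HasDerivAt (fun s : ℝ => Real.sqrt (1 - s^2))
      (1 / (2 * Real.sqrt (1 - t^2)) * (-(2*t))) t :=
    (Real.hasDerivAt_sqrt hs.ne').comp t hin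
  have harc : HasDerivAt Real.arccos (-(1 / Real.sqrt (1 - t^2))) t :=
    Real.hasDerivAt_arccos (by linarith) (by linarith)
  have hmul : HasDerivAt (fun s : ℝ => s * Real.arccos s)
      (1 * Real.arccos t + t * (-(1 / Real.sqrt (1 - t^2)))) t :=
    (hasDerivAt_id t).mul harc
  have := (hsqrt.sub hmul).div_const π
  convert this using 1
  · rfl
  · rfl
  · rfl
  · field_simp
    ring

lemma deriv_gfun {t : ℝ} (h1 : -1 < t) (h2 : t < 1) :
    deriv gfun t = -(Real.arccos t) / π :=
  (hasDerivAt_gfun h1 h2).deriv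

lemma deriv2_gfun {t : ℝ} (h1 : -1 < t) (h2 : t < 1) :
    deriv (deriv gfun) t = 1 / (π * Real.sqrt (1 - t^2)) := by
  have hs : (0:ℝ) < 1 - t^2 := by nlinarith
  have hsq : Real.sqrt (1 - t^2) ≠ 0 := by positivity
  have hev : deriv gfun =ᶠ[nhds t] (fun s => -(Real.arccos s) / π) := by
    filter_upwards [isOpen_Ioo.mem_nhds (show t ∈ Ioo (-1:ℝ) 1 from ⟨h1, h2⟩)] with s hs
    exact deriv_gfun hs.1 hs.2
  rw [hev.deriv_eq]
  have harc : HasDerivAt Real.arccos (-(1 / Real.sqrt (1 - t^2))) t :=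
    Real.hasDerivAt_arccos (by linarith) (by linarith)
  have : HasDerivAt (fun s => -(Real.arccos s) / π)
      (-(-(1 / Real.sqrt (1 - t^2))) / π) t := (harc.neg).div_const π
  rw [this.deriv]
  field_simp

lemma Kcurv_cos {θ : ℝ} (h0 : 0 < θ) (hπ : θ < π) :
    Kcurv (Real.cos θ) = 1 / (π * Real.sin θ * (1 + (θ/π)^2) ^ ((3:ℝ)/2)) := by
  have hc1 : Real.cos θ < 1 := by
    have := Real.cos_lt_cos_of_nonneg_of_le_pi le_rfl hπ.le h0
    simpa using this
  have hc2 : -1 < Real.cos θ := by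
    have := Real.cos_lt_cos_of_nonneg_of_le_pi (by positivity) le_rfl hπ
    simpa using this
  have hsin : 0 < Real.sin θ := Real.sin_pos_of_pos_of_lt_pi h0 hπ
  have hsq : Real.sqrt (1 - Real.cos θ ^ 2) = Real.sin θ := by
    rw [show (1 : ℝ) - Real.cos θ ^ 2 = Real.sin θ ^ 2 by
      have := Real.sin_sq_add_cos_sq θ; linarith]
    exact Real.sqrt_sq hsin.le
  rw [Kcurv, deriv2_gfun hc2 hc1, deriv_gfun hc2 hc1, hsq, Real.arccos_cos h0.le hπ.le]
  have : (-θ / π)^2 = (θ/π)^2 := by ring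
  rw [this]
  rw [div_div]

lemma ratio_mem {ξ : ℝ × ℝ} (hξ : ξ ∈ cone0) : ξ.1 / ξ.2 ∈ Ioo (0:ℝ) 1 := by
  obtain ⟨h1, h2, h3⟩ := hξ
  constructor
  · positivity
  · rw [div_lt_one h2]
    have := (one_lt_div h1).mp h3
    linarith

lemma Kxi_eq {ξ : ℝ × ℝ} (hξ : ξ ∈ cone0) :
    Kxi ξ = 1 / (π * Real.sin (π * (ξ.1/ξ.2)) *
      (1 + (ξ.1/ξ.2)^2) ^ ((3:ℝ)/2)) := by
  obtain ⟨hr0, hr1⟩ := ratio_mem hξ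
  have hπ := Real.pi_pos
  have h0 : 0 < π * (ξ.1/ξ.2) := by positivity
  have h1 : π * (ξ.1/ξ.2) < π := by nlinarith
  have : tpar ξ = Real.cos (π * (ξ.1/ξ.2)) := by
    rw [tpar, mul_div_assoc]
  rw [Kxi, this, Kcurv_cos h0 h1,
    mul_comm π (ξ.1/ξ.2), mul_div_assoc, div_self hπ.ne', mul_one]

lemma P_bounds {r : ℝ} (h0 : 0 < r) (h1 : r < 1) :
    1 ≤ (1 + r^2) ^ ((3:ℝ)/2) ∧ (1 + r^2) ^ ((3:ℝ)/2) ≤ 3 := by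
  constructor
  · exact Real.one_le_rpow (by nlinarith) (by norm_num)
  · have h2 : (1 + r^2 : ℝ) ≤ 2 := by nlinarith
    have := Real.rpow_le_rpow (by positivity) h2 (by norm_num : (0:ℝ) ≤ 3/2)
    refine this.trans ?_
    have h8 : ((2:ℝ) ^ ((3:ℝ)/2)) ^ (2:ℕ) = 8 := by
      rw [← Real.rpow_natCast ((2:ℝ) ^ ((3:ℝ)/2)) 2, ← Real.rpow_mul (by norm_num)]
      norm_num
    have hpos : (0:ℝ) ≤ (2:ℝ) ^ ((3:ℝ)/2) := Real.rpow_nonneg (by norm_num) _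
    nlinarith [h8]

lemma sin_bounds {r : ℝ} (h0 : 0 < r) (h1 : r < 1) :
    2 * min r (1 - r) ≤ Real.sin (π * r) ∧ Real.sin (π * r) ≤ π * min r (1 - r) := by
  have hπ := Real.pi_pos
  have hsin : Real.sin (π * r) = Real.sin (π * (1 - r)) := by
    rw [show π * (1 - r) = π - π * r by ring, Real.sin_pi_sub]
  constructor
  · rcases le_total r (1 - r) with h | h
    · rw [min_eq_left h]
      have := Real.mul_le_sin (x := π * r) (by positivity) (by nlinarith)
      calc 2 * r = 2 / π * (π * r) := by field_simp
        _ ≤ Real.sin (π * r) := this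
    · rw [min_eq_right h]
      rw [hsin]
      have := Real.mul_le_sin (x := π * (1 - r)) (by nlinarith) (by nlinarith)
      calc 2 * (1 - r) = 2 / π * (π * (1 - r)) := by field_simp
        _ ≤ Real.sin (π * (1 - r)) := this
  · rcases le_total r (1 - r) with h | h
    · rw [min_eq_left h]
      exact (Real.sin_le (by positivity))
    · rw [min_eq_right h, hsin]
      exact (Real.sin_le (by nlinarith))

lemma ratio_close {ξ η : ℝ × ℝ} (hξ : ξ ∈ cone0) (hη : η ∈ cone0) :
    |η.1 / η.2 - ξ.1 / ξ.2| ≤ 2 * ang η ξ := by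
  obtain ⟨hc, hd, hcd⟩ := hξ
  obtain ⟨ha, hb, hab⟩ := hη
  set a := η.1; set b := η.2; set c := ξ.1; set d := ξ.2
  have hba : a < b := by have := (one_lt_div ha).mp hab; linarith
  have hdc : c < d := by have := (one_lt_div hc).mp hcd; linarith
  have hN1 : 0 < Real.sqrt (a^2 + b^2) := Real.sqrt_pos.mpr (by positivity)
  have hN2 : 0 < Real.sqrt (c^2 + d^2) := Real.sqrt_pos.mpr (by positivity)
  set N := Real.sqrt (a^2 + b^2) * Real.sqrt (c^2 + d^2) with hNdef
  have hN : 0 < N := by positivity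
  have hNsq : N^2 = (a^2 + b^2) * (c^2 + d^2) := by
    rw [hNdef, mul_pow, Real.sq_sqrt (by positivity), Real.sq_sqrt (by positivity)]
  set D := (a * c + b * d) / N with hDdef
  have key : 1 - D^2 = ((a*d - b*c)/N)^2 := by
    rw [hDdef, div_pow, div_pow]
    field_simp
    nlinarith [hNsq]
  have hsin : Real.sin (ang η ξ) = |a*d - b*c| / N := by
    show Real.sin (Real.arccos D) = _
    rw [Real.sin_arccos, key, Real.sqrt_sq_eq_abs, abs_div, abs_of_pos hN]
  have hang0 : 0 ≤ ang η ξ := Real.arccos_nonneg _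
  have hsin_le : Real.sin (ang η ξ) ≤ ang η ξ := Real.sin_le hang0
  have hNle : N ≤ 2 * (b * d) := by
    have e1 : Real.sqrt (a^2 + b^2) ≤ Real.sqrt (2 * b^2) :=
      Real.sqrt_le_sqrt (by nlinarith)
    have e2 : Real.sqrt (c^2 + d^2) ≤ Real.sqrt (2 * d^2) :=
      Real.sqrt_le_sqrt (by nlinarith)
    have e3 : Real.sqrt (2 * b^2) * Real.sqrt (2 * d^2) = 2 * (b * d) := by
      rw [← Real.sqrt_mul (by positivity)]
      rw [show (2:ℝ) * b^2 * (2 * d^2) = (2 * (b*d))^2 by ring]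
      exact Real.sqrt_sq (by positivity)
    calc N ≤ Real.sqrt (2 * b^2) * Real.sqrt (2 * d^2) :=
          mul_le_mul e1 e2 hN2.le (Real.sqrt_nonneg _)
      _ = 2 * (b * d) := e3
  have habs : |a / b - c / d| = |a*d - b*c| / (b * d) := by
    rw [div_sub_div _ _ (ne_of_gt hb) (ne_of_gt hd), abs_div,
      abs_of_pos (by positivity : (0:ℝ) < b * d)]
  rw [habs]
  have step : |a*d - b*c| / (b * d) ≤ 2 * (|a*d - b*c| / N) := by
    rw [div_le_iff₀ (by positivity), mul_comm 2 _, mul_assoc]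
    rw [div_mul_eq_mul_div, le_div_iff₀ hN]
    have : |a*d - b*c| * N ≤ |a*d - b*c| * (2 * (b*d)) :=
      mul_le_mul_of_nonneg_left hNle (abs_nonneg _)
    nlinarith [this]
  calc |a*d - b*c| / (b*d) ≤ 2 * (|a*d - b*c| / N) := step
    _ = 2 * Real.sin (ang η ξ) := by rw [hsin]
    _ ≤ 2 * ang η ξ := by linarith

set_option maxHeartbeats 1000000 in
theorem curvature_comparable_in_small_angle :
    ∃ c₁ A A' : ℝ, 0 < c₁ ∧ 0 < A ∧ 0 < A' ∧
      ∀ ξ ∈ cone0, ∀ η ∈ cone0, ang η ξ ≤ c₁ / Kxi ξ →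
        A * Kxi ξ ≤ Kxi η ∧ Kxi η ≤ A' * Kxi ξ := by
  refine ⟨1/120, 1/25, 10, by norm_num, by norm_num, by norm_num, ?_⟩
  intro ξ hξ η hη hang
  have hπ := Real.pi_pos
  have hπ3 := Real.pi_gt_three
  have hπ4 : π < 3.15 := Real.pi_lt_d2
  obtain ⟨hr0, hr1⟩ := ratio_mem hξ
  obtain ⟨hs0, hs1⟩ := ratio_mem hη
  set r := ξ.1 / ξ.2
  set s := η.1 / η.2
  obtain ⟨hPr1, hPr3⟩ := P_bounds hr0 hr1
  obtain ⟨hPs1, hPs3⟩ := P_bounds hs0 hs1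
  obtain ⟨hsinr1, hsinr2⟩ := sin_bounds hr0 hr1
  obtain ⟨hsins1, hsins2⟩ := sin_bounds hs0 hs1
  set m := min r (1 - r) with hm
  set n := min s (1 - s) with hn
  have hm0 : 0 < m := lt_min hr0 (by linarith)
  have hn0 : 0 < n := lt_min hs0 (by linarith)
  have hsinr_pos : 0 < Real.sin (π * r) := lt_of_lt_of_le (by positivity) hsinr1
  have hsins_pos : 0 < Real.sin (π * s) := lt_of_lt_of_le (by positivity) hsins1
  set Pr := (1 + r^2) ^ ((3:ℝ)/2)
  set Ps := (1 + s^2) ^ ((3:ℝ)/2)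
  have hKr : Kxi ξ = 1 / (π * Real.sin (π * r) * Pr) := Kxi_eq hξ
  have hKs : Kxi η = 1 / (π * Real.sin (π * s) * Ps) := Kxi_eq hη
  have hXr : 0 < π * Real.sin (π * r) * Pr := by positivity
  have hXs : 0 < π * Real.sin (π * s) * Ps := by positivity
  -- bound on the angle hypothesis
  have hdiv : (1:ℝ)/120 / Kxi ξ = (1/120) * (π * Real.sin (π * r) * Pr) := by
    rw [hKr]
    field_simp
  have hsr : |s - r| ≤ m / 2 := by
    have h1 : |s - r| ≤ 2 * ang η ξ := ratio_close hξ hη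
    have h2 : 2 * ang η ξ ≤ 2 * ((1/120) * (π * Real.sin (π * r) * Pr)) := by
      have := hang
      rw [hdiv] at this
      linarith
    have h3 : π * Real.sin (π * r) * Pr ≤ π * (π * m) * 3 := by
      have e1 : π * Real.sin (π * r) ≤ π * (π * m) :=
        mul_le_mul_of_nonneg_left hsinr2 hπ.le
      have e2 : π * Real.sin (π * r) * Pr ≤ π * (π * m) * Pr :=
        mul_le_mul_of_nonneg_right e1 (by positivity)
      have e3 : π * (π * m) * Pr ≤ π * (π * m) * 3 :=
        mul_le_mul_of_nonneg_left hPr3 (by positivity)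
      linarith
    have hππ : π * π ≤ 10 := by nlinarith
    have hπ2 : π * (π * m) * 3 ≤ 30 * m := by nlinarith [hππ, hm0]
    calc |s - r| ≤ 2 * ang η ξ := h1
      _ ≤ 2 * ((1/120) * (π * Real.sin (π * r) * Pr)) := h2
      _ ≤ 2 * ((1/120) * (π * (π * m) * 3)) := by linarith
      _ ≤ m / 2 := by linarith
  have habs1 : s - r ≤ m / 2 := (abs_le.mp hsr).2
  have habs2 : -(m/2) ≤ s - r := (abs_le.mp hsr).1
  have hmr : m ≤ r := min_le_left _ _
  have hmr' : m ≤ 1 - r := min_le_right _ _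
  have hn_ge : m / 2 ≤ n := by
    apply le_min
    · linarith
    · linarith
  have hn_le : n ≤ 3 / 2 * m := by
    rcases le_total r (1 - r) with h | h
    · have : m = r := min_eq_left h
      calc n ≤ s := min_le_left _ _
        _ ≤ r + m/2 := by linarith
        _ = 3/2 * m := by rw [this]; ring
    · have : m = 1 - r := min_eq_right h
      calc n ≤ 1 - s := min_le_right _ _
        _ ≤ (1 - r) + m/2 := by linarith
        _ = 3/2 * m := by rw [this]; ring
  -- sin comparisons
  have hsin_lb : Real.sin (π * r) ≤ π * Real.sin (π * s) := by
    have e1 : m ≤ Real.sin (π * s) := by linarith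
    have e2 : π * m ≤ π * Real.sin (π * s) := mul_le_mul_of_nonneg_left e1 hπ.le
    linarith
  have hsin_ub : Real.sin (π * s) ≤ 3 * π / 4 * Real.sin (π * r) := by
    have e1 : π * n ≤ π * (3 / 2 * m) := mul_le_mul_of_nonneg_left hn_le hπ.le
    have e2 : 3 * π / 4 * (2 * m) ≤ 3 * π / 4 * Real.sin (π * r) :=
      mul_le_mul_of_nonneg_left hsinr1 (by positivity)
    linarith
  constructor
  · -- 1/25 * Kξ ≤ Kη
    rw [hKr, hKs]
    rw [mul_one_div, div_le_div_iff₀ hXr hXs]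
    have t1 : Real.sin (π * s) * Ps ≤ (3 * π / 4 * Real.sin (π * r)) * 3 :=
      mul_le_mul hsin_ub hPs3 (by positivity) (by positivity)
    have t2 : Real.sin (π * r) * 1 ≤ Real.sin (π * r) * Pr :=
      mul_le_mul_of_nonneg_left hPr1 hsinr_pos.le
    have t5 : π * Real.sin (π * r) ≤ 3.15 * Real.sin (π * r) :=
      mul_le_mul_of_nonneg_right hπ4.le hsinr_pos.le
    have t3 : Real.sin (π * s) * Ps ≤ 25 * (Real.sin (π * r) * Pr) := by nlinarith [t1, t2, t5]
    have t4 : π * (Real.sin (π * s) * Ps) ≤ π * (25 * (Real.sin (π * r) * Pr)) :=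
      mul_le_mul_of_nonneg_left t3 hπ.le
    nlinarith [t4]
  · rw [hKr, hKs]
    rw [mul_one_div, div_le_div_iff₀ hXs hXr]
    have t1 : Real.sin (π * r) * Pr ≤ (π * Real.sin (π * s)) * 3 :=
      mul_le_mul hsin_lb hPr3 (by positivity) (by positivity)
    have t2 : Real.sin (π * s) * 1 ≤ Real.sin (π * s) * Ps :=
      mul_le_mul_of_nonneg_left hPs1 hsins_pos.le
    have t5 : π * Real.sin (π * s) ≤ 3.15 * Real.sin (π * s) :=
      mul_le_mul_of_nonneg_right hπ4.le hsins_pos.le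
    have t3 : Real.sin (π * r) * Pr ≤ 10 * (Real.sin (π * s) * Ps) := by nlinarith [t1, t2, t5]
    have t4 : π * (Real.sin (π * r) * Pr) ≤ π * (10 * (Real.sin (π * s) * Ps)) :=
      mul_le_mul_of_nonneg_left t3 hπ.le
    nlinarith [t4]
end

section
/- There is a constant C such that for every μ > 1 and every unit vector ξ = (ξ₁, ξ₂) ∈ ℝ² with ξ₁ > 0 and ξ₂ < ξ₁, |I(μ, ξ)| ≤ (C/μ) ( |ξ₂/ξ₁| + |(ξ₁+ξ₂)/(ξ₁−ξ₂)| + 1/(ξ₁(ξ₁−ξ₂)) ). -/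
open Real Set MeasureTheory intervalIntegral

noncomputable def osc (μ : ℝ) (ξ : ℝ × ℝ) : ℂ :=
  ∫ t in (-1:ℝ)..1,
    Complex.exp (-Complex.I * (μ:ℂ) * ((ξ.1:ℂ) * (t:ℂ) + (ξ.2:ℂ) * (Complex.ofReal (gfun t))))
      * ((ξ.2:ℂ) - (ξ.1:ℂ) * (Complex.ofReal (deriv gfun t)))

lemma gfun_hasDerivAt {t : ℝ} (h1 : -1 < t) (h2 : t < 1) :
    HasDerivAt gfun (-(Real.arccos t) / Real.pi) t := by
  have hpos : (0:ℝ) < 1 - t^2 := by nlinarith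
  have hs : 0 < Real.sqrt (1 - t^2) := Real.sqrt_pos.mpr hpos
  have harc : HasDerivAt Real.arccos (-(1 / Real.sqrt (1 - t^2))) t :=
    Real.hasDerivAt_arccos (by linarith) (by linarith)
  have hq : HasDerivAt (fun t : ℝ => 1 - t^2) (-(2*t)) t := by
    simpa using ((hasDerivAt_pow 2 t).const_sub 1)
  have hsq : HasDerivAt (fun t : ℝ => Real.sqrt (1 - t^2))
      (1 / (2 * Real.sqrt (1 - t^2)) * (-(2*t))) t :=
    (Real.hasDerivAt_sqrt hpos.ne').comp t hq
  have hmul : HasDerivAt (fun t : ℝ => t * Real.arccos t)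
      (1 * Real.arccos t + t * (-(1 / Real.sqrt (1 - t^2)))) t :=
    (hasDerivAt_id t).mul harc
  have h := (hsq.sub hmul).div_const Real.pi
  refine h.congr_deriv ?_
  field_simp
  ring

lemma alg1 (A B u v s P : ℝ) (hs : s ≠ 0) (hP : P ≠ 0) (hu : u ≠ 0)
    (huv : A * u + B * v = A^2 + B^2) :
    (A * -(1 / s) / P * u - v * -(B * -(1 / s) / P)) / u ^ 2
      = -((A^2 + B^2) / (P * s * u^2)) := by
  rw [← huv]
  field_simp
  ring

section Key

variable {μ A B : ℝ}

lemma key (hμ : 1 < μ) (hA : 0 < A) (hBA : B < A) :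
    ‖(∫ t in (-1:ℝ)..1,
      Complex.exp (-Complex.I * (μ:ℂ) * ((A:ℂ) * (t:ℂ) + (B:ℂ) * (Complex.ofReal (gfun t))))
        * ((B:ℂ) - (A:ℂ) * (Complex.ofReal (deriv gfun t))))‖ ≤
      (2 / μ) * (|B / A| + |(A + B) / (A - B)| + 1 / (A * (A - B))) := by
  have hμ0 : (0:ℝ) < μ := by linarith
  have hπ : (0:ℝ) < Real.pi := Real.pi_pos
  set p : ℝ → ℝ := fun t => A - B * Real.arccos t / Real.pi with hpdef
  set a : ℝ → ℝ := fun t => B + A * Real.arccos t / Real.pi with hadef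
  have hp : ∀ t, 0 < p t := by
    intro t
    have h1 : 0 ≤ Real.arccos t := Real.arccos_nonneg t
    have h2 : Real.arccos t ≤ Real.pi := Real.arccos_le_pi t
    simp only [hpdef, sub_pos, div_lt_iff₀ hπ]
    rcases le_or_gt B 0 with hB | hB
    · nlinarith
    · nlinarith
  set φr : ℝ → ℝ := fun t => A * t + B * gfun t with hφdef
  set E : ℝ → ℂ := fun t => Complex.exp (-Complex.I * (μ:ℂ) * ((φr t : ℝ) : ℂ)) with hEdef
  set b : ℝ → ℝ := fun t => a t / p t with hbdef
  set db : ℝ → ℝ := fun t =>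
    -((A^2 + B^2) / (Real.pi * Real.sqrt (1 - t^2) * (p t)^2)) with hdbdef
  set F : ℝ → ℂ := fun t => E t * (b t : ℂ) * (Complex.I / (μ:ℂ)) with hFdef
  -- basic continuity
  have hcont_arccos : Continuous Real.arccos := Real.continuous_arccos
  have hcont_g : Continuous gfun := by
    unfold gfun
    exact ((continuous_const.sub (continuous_pow 2)).sqrt.sub
      (continuous_id.mul hcont_arccos)).div_const _
  have hcont_p : Continuous p :=
    continuous_const.sub ((continuous_const.mul hcont_arccos).div_const _)
  have hcont_a : Continuous a :=
    continuous_const.add ((continuous_const.mul hcont_arccos).div_const _)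
  have hcont_b : Continuous b := hcont_a.div hcont_p fun t => (hp t).ne'
  have hcont_E : Continuous E := by
    apply Continuous.cexp
    exact continuous_const.mul (Complex.continuous_ofReal.comp
      ((continuous_const.mul continuous_id).add (continuous_const.mul hcont_g)))
  have hcont_F : Continuous F :=
    (hcont_E.mul (Complex.continuous_ofReal.comp hcont_b)).mul continuous_const
  -- norm of E
  have hE1 : ∀ t, ‖E t‖ = 1 := by
    intro t
    simp [hEdef, Complex.norm_exp]
  -- derivatives on Ioo
  have hb' : ∀ t ∈ Ioo (-1:ℝ) 1, HasDerivAt b (db t) t := by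
    intro t ht
    obtain ⟨ht1, ht2⟩ := ht
    have hpos : (0:ℝ) < 1 - t^2 := by nlinarith
    have hs : 0 < Real.sqrt (1 - t^2) := Real.sqrt_pos.mpr hpos
    have harc : HasDerivAt Real.arccos (-(1 / Real.sqrt (1 - t^2))) t :=
      Real.hasDerivAt_arccos (by linarith) (by linarith)
    have ha' : HasDerivAt a (A * (-(1 / Real.sqrt (1 - t^2))) / Real.pi) t :=
      ((harc.const_mul A).div_const Real.pi).const_add B
    have hp' : HasDerivAt p (-(B * (-(1 / Real.sqrt (1 - t^2))) / Real.pi)) t :=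
      ((harc.const_mul B).div_const Real.pi).const_sub A
    have h := ha'.div hp' (hp t).ne'
    have huv : A * p t + B * a t = A^2 + B^2 := by
      simp only [hpdef, hadef]
      field_simp
      ring
    have halg := alg1 A B (p t) (a t) (Real.sqrt (1 - t^2)) Real.pi hs.ne' hπ.ne'
      (hp t).ne' huv
    rw [halg] at h
    exact h
  have hE' : ∀ t ∈ Ioo (-1:ℝ) 1, HasDerivAt E (E t * (-Complex.I * μ * (p t : ℂ))) t := by
    intro t ht
    have hφ' : HasDerivAt φr (p t) t := by
      have := ((hasDerivAt_id t).const_mul A).add ((gfun_hasDerivAt ht.1 ht.2).const_mul B)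
      refine this.congr_deriv (Eq.symm ?_)
      simp only [hpdef]
      ring
    have hc : HasDerivAt (fun t : ℝ => ((φr t : ℝ) : ℂ)) ((p t : ℂ)) t := hφ'.ofReal_comp
    have := ((hc.const_mul (-Complex.I * (μ:ℂ)))).cexp
    convert this using 1
  have hF' : ∀ t ∈ Ioo (-1:ℝ) 1,
      HasDerivAt F (E t * (a t : ℂ) + E t * (db t : ℂ) * (Complex.I / μ)) t := by
    intro t ht
    have h := ((hE' t ht).mul ((hb' t ht).ofReal_comp)).mul_const (Complex.I / (μ:ℂ))
    refine h.congr_deriv (Eq.symm ?_)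
    have hpb : (p t : ℝ) * b t = a t := by
      simp only [hbdef]
      rw [mul_div_cancel₀ _ (hp t).ne']
    have hμc : (μ:ℂ) ≠ 0 := by exact_mod_cast hμ0.ne'
    have hab : ((a t : ℝ) : ℂ) = (p t : ℂ) * (b t : ℂ) := by
      rw [← Complex.ofReal_mul, hpb]
    rw [hab]
    field_simp
    linear_combination (E t * (p t : ℂ) * (b t : ℂ) * (μ:ℂ)) * Complex.I_mul_I
  -- integrability
  have hdb_nonpos : ∀ t, db t ≤ 0 := by
    intro t
    simp only [hdbdef, neg_nonpos]
    apply div_nonneg (by positivity)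
    have h0 := Real.sqrt_nonneg (1 - t^2)
    positivity
  have hint_db : IntervalIntegrable db volume (-1) 1 := by
    have h : IntervalIntegrable (fun t => -db t) volume (-1) 1 := by
      apply intervalIntegrable_deriv_of_nonneg (g := fun t => -b t)
        (hcont_b.neg.continuousOn)
      · intro x hx
        have hx' : x ∈ Ioo (-1:ℝ) 1 := by simpa using hx
        exact (hb' x hx').neg
      · intro x hx
        simpa using hdb_nonpos x
    have heq : (fun t => -(-db t)) = db := by funext t; ring
    rw [← heq]
    exact h.neg
  -- FTC for b
  have hb_FTC : ∫ t in (-1:ℝ)..1, db t = b 1 - b (-1) :=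
    integral_eq_sub_of_hasDerivAt_of_le (by norm_num) hcont_b.continuousOn hb' hint_db
  -- integrability of complex pieces
  have hint_Edb : IntervalIntegrable (fun t => E t * (db t : ℂ)) volume (-1) 1 := by
    have hdbC : IntervalIntegrable (fun t => ((db t : ℝ) : ℂ)) volume (-1) 1 :=
      ⟨hint_db.1.ofReal, hint_db.2.ofReal⟩
    exact hdbC.continuousOn_mul hcont_E.continuousOn
  have hint_G : IntervalIntegrable
      (fun t => E t * (a t : ℂ) + E t * (db t : ℂ) * (Complex.I / μ)) volume (-1) 1 :=
    ((hcont_E.mul (Complex.continuous_ofReal.comp hcont_a)).intervalIntegrable _ _).add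
      (hint_Edb.mul_const _)
  -- FTC for F
  have hF_FTC : (∫ t in (-1:ℝ)..1, (E t * (a t : ℂ) + E t * (db t : ℂ) * (Complex.I / μ)))
      = F 1 - F (-1) :=
    integral_eq_sub_of_hasDerivAt_of_le (by norm_num) hcont_F.continuousOn hF' hint_G
  -- split the integral
  have hsplit : (∫ t in (-1:ℝ)..1, E t * (a t : ℂ))
      = (F 1 - F (-1)) - (∫ t in (-1:ℝ)..1, E t * (db t : ℂ)) * (Complex.I / μ) := by
    rw [← hF_FTC, ← intervalIntegral.integral_mul_const,
      ← intervalIntegral.integral_sub hint_G (hint_Edb.mul_const _)]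
    simp
  -- rewrite the oscillatory integral
  have hosc : (∫ t in (-1:ℝ)..1,
      Complex.exp (-Complex.I * (μ:ℂ) * ((A:ℂ) * (t:ℂ) + (B:ℂ) * (Complex.ofReal (gfun t))))
        * ((B:ℂ) - (A:ℂ) * (Complex.ofReal (deriv gfun t))))
      = ∫ t in (-1:ℝ)..1, E t * (a t : ℂ) := by
    apply intervalIntegral.integral_congr_ae
    have h1 : ∀ᵐ (x : ℝ) ∂volume, x ≠ (1:ℝ) := by
      rw [MeasureTheory.ae_iff]
      simp only [ne_eq, not_not, Set.setOf_eq_eq_singleton]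
      exact Real.volume_singleton
    filter_upwards [h1] with x hx hmem
    rw [uIoc_of_le (by norm_num : (-1:ℝ) ≤ 1)] at hmem
    have hx1 : -1 < x := hmem.1
    have hx2 : x < 1 := lt_of_le_of_ne hmem.2 hx
    have hd := (gfun_hasDerivAt hx1 hx2).deriv
    rw [hd]
    simp only [hEdef, hadef, hφdef]
    have harg : (-Complex.I * (μ:ℂ) * ((A:ℂ) * (x:ℂ) + (B:ℂ) * (Complex.ofReal (gfun x))))
        = -Complex.I * (μ:ℂ) * (((A * x + B * gfun x : ℝ) : ℝ) : ℂ) := by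
      push_cast; ring
    rw [harg]
    congr 1
    push_cast
    ring
  -- endpoint values
  have hb1 : b 1 = B / A := by
    simp [hbdef, hadef, hpdef, Real.arccos_one]
  have hbm1 : b (-1) = (A + B) / (A - B) := by
    simp only [hbdef, hadef, hpdef, Real.arccos_neg_one]
    rw [mul_div_assoc, div_self hπ.ne', mul_one, mul_div_assoc, div_self hπ.ne', mul_one,
      add_comm]
  -- norms
  have habs_F : ∀ t, ‖F t‖ = |b t| / μ := by
    intro t
    simp only [hFdef]
    rw [norm_mul, norm_mul,
      hE1, one_mul, norm_div, Complex.norm_I, Complex.norm_real, Complex.norm_real,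
      Real.norm_eq_abs, Real.norm_eq_abs, abs_of_pos hμ0]
    ring
  have hZ : ‖∫ t in (-1:ℝ)..1, E t * (db t : ℂ)‖ ≤ b (-1) - b 1 := by
    have h1 := intervalIntegral.norm_integral_le_integral_norm
      (f := fun t => E t * (db t : ℂ)) (μ := volume) (a := (-1:ℝ)) (b := 1) (by norm_num)
    have h2 : (∫ t in (-1:ℝ)..1, ‖E t * (db t : ℂ)‖) = ∫ t in (-1:ℝ)..1, -db t := by
      apply intervalIntegral.integral_congr
      intro x _
      show ‖E x * (db x : ℂ)‖ = -db x
      rw [norm_mul, hE1, one_mul,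
        Complex.norm_real, Real.norm_eq_abs, abs_of_nonpos (hdb_nonpos x)]
    rw [h2, intervalIntegral.integral_neg, hb_FTC] at h1
    linarith
  -- final estimate
  rw [hosc, hsplit]
  have hIμ : ‖Complex.I / (μ:ℂ)‖ = 1 / μ := by
    rw [norm_div, Complex.norm_I,
      Complex.norm_real, Real.norm_eq_abs, abs_of_pos hμ0]
  have step1 : ‖F 1 - F (-1) - (∫ t in (-1:ℝ)..1, E t * (db t : ℂ)) * (Complex.I / μ)‖
      ≤ ‖F 1‖ + ‖F (-1)‖ + ‖∫ t in (-1:ℝ)..1, E t * (db t : ℂ)‖ * (1 / μ) := by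
    refine le_trans (norm_sub_le _ _) ?_
    rw [norm_mul, hIμ]
    exact add_le_add_left (norm_sub_le _ _) _
  have hμinv : (0:ℝ) ≤ 1 / μ := by positivity
  have step2 : ‖∫ t in (-1:ℝ)..1, E t * (db t : ℂ)‖ * (1 / μ) ≤ (b (-1) - b 1) * (1 / μ) :=
    mul_le_mul_of_nonneg_right hZ hμinv
  have h3 : b (-1) - b 1 ≤ |b (-1)| + |b 1| := by
    have := le_abs_self (b (-1))
    have := neg_abs_le (b 1)
    linarith
  have hz : (0:ℝ) ≤ 1 / (A * (A - B)) := by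
    have : 0 < A - B := by linarith
    positivity
  rw [habs_F, habs_F] at step1
  have step3 : |b 1| / μ + |b (-1)| / μ + (b (-1) - b 1) * (1 / μ)
      ≤ (2 / μ) * (|b 1| + |b (-1)|) := by
    have h4 : (b (-1) - b 1) * (1/μ) ≤ (|b (-1)| + |b 1|) * (1/μ) :=
      mul_le_mul_of_nonneg_right h3 hμinv
    have : |b 1| / μ + |b (-1)| / μ + (|b (-1)| + |b 1|) * (1/μ)
        = (2 / μ) * (|b 1| + |b (-1)|) := by field_simp; ring
    linarith
  have step4 : (2 / μ) * (|b 1| + |b (-1)|)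
      ≤ (2 / μ) * (|B / A| + |(A + B) / (A - B)| + 1 / (A * (A - B))) := by
    rw [hb1, hbm1]
    have h2μ : (0:ℝ) ≤ 2 / μ := by positivity
    apply mul_le_mul_of_nonneg_left _ h2μ
    linarith [hz]
  calc ‖F 1 - F (-1) - (∫ t in (-1:ℝ)..1, E t * (db t : ℂ)) * (Complex.I / μ)‖
      ≤ |b 1| / μ + |b (-1)| / μ + (b (-1) - b 1) * (1 / μ) := by linarith
    _ ≤ (2 / μ) * (|b 1| + |b (-1)|) := step3
    _ ≤ _ := step4


end Key

theorem osc_bound_no_critical_point :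
    ∃ C : ℝ, 0 < C ∧ ∀ μ : ℝ, 1 < μ → ∀ ξ : ℝ × ℝ, enorm2 ξ = 1 →
      0 < ξ.1 → ξ.2 < ξ.1 →
      ‖osc μ ξ‖ ≤
        (C / μ) * (|ξ.2 / ξ.1| + |(ξ.1 + ξ.2) / (ξ.1 - ξ.2)| + 1 / (ξ.1 * (ξ.1 - ξ.2))) := by
  refine ⟨2, by norm_num, ?_⟩
  intro μ hμ ξ _ h1 h2
  simpa [osc] using key hμ h1 h2
end
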